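/- Let Λ → A be a morphism of complete local Noetherian k-algebras with residue field k, presented as A = R/I with R = Λ[[X_1,…,X_s]] and I ⊆ m_Λ R + (X_1,…,X_s)². Then the elements of the subgroup Ext¹_A(Ω¹_{A/Λ}, M) ⊆ T¹_{A/Λ}(M) correspond exactly to those Λ-algebra extensions 0 → M → A' → A → 0 (with M² = 0) for which the Jacobi map j : M → Ω¹_{A'/Λ} ⊗_{A'} A is injective. -/

import Mathlib

open scoped TensorProduct
set_option synthInstance.maxHeartbeats 1000000 in
set_option maxHeartbeats 2000000 in

theorem stmt17_aux (Λ : Type) [CommRing Λ] (B : Type) [CommRing B] [Algebra Λ B]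
    (M : Type) [AddCommGroup M] [Module B M]
    (A' : Type) [CommRing A'] [Algebra Λ A']
    (π : A' →ₐ[Λ] B) (hπ : Function.Surjective π)
    (hsq : ∀ x y : A', π x = 0 → π y = 0 → x * y = 0)
    (ι : M →+ A') (hιinj : Function.Injective ι)
    (hιker : ∀ x : A', π x = 0 ↔ x ∈ Set.range ι)
    (hιlin : ∀ (a' : A') (m : M), ι (π a' • m) = a' * ι m) :
    (Function.Injective (fun m : M =>
      Submodule.Quotient.mk
        (p := ((RingHom.ker π.toRingHom) • ⊤ : Submodule A' (Ω[A'⁄Λ])))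
        ((KaehlerDifferential.D Λ A') (ι m)))) ↔
    (∃ (E : Type) (_ : AddCommGroup E) (_ : Module B E)
        (_ : Module Λ E) (_ : IsScalarTower Λ B E)
        (_ : Module Bᵐᵒᵖ E)
        (_ : IsCentralScalar B E)
        (q : E →ₗ[B] Ω[B⁄Λ])
        (inc : M →ₗ[B] E),
      Function.Surjective q ∧ Function.Injective inc ∧ Function.Exact inc q ∧
      ∃ ρ : A' →+* TrivSqZeroExt B E,
        Function.Injective ρ ∧
        (∀ x : A', (ρ x).fst = π x) ∧
        (∀ x : A', (KaehlerDifferential.D Λ B) (ρ x).fst = q (ρ x).snd) ∧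
        (∀ m : M, ρ (ι m) = TrivSqZeroExt.inr (inc m)) ∧
        (∀ c : Λ, ρ (algebraMap Λ A' c) = algebraMap Λ (TrivSqZeroExt B E) c) ∧
        (∀ y : TrivSqZeroExt B E,
          (KaehlerDifferential.D Λ B) y.fst = q y.snd → y ∈ Set.range ρ)) := by
  classical
  constructor
  · intro hj
    letI : Algebra A' B := π.toRingHom.toAlgebra
    haveI : IsScalarTower Λ A' B :=
      IsScalarTower.of_algebraMap_eq fun c => (π.commutes c).symm
    have hππ : Function.Surjective (algebraMap A' B) := hπ
    have hkey : ∀ (x : A') (ω : Ω[A'⁄Λ]),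
        (1 : B) ⊗ₜ[A'] (x • ω) = π x • ((1 : B) ⊗ₜ[A'] ω) := by
      intro x ω
      rw [← TensorProduct.smul_tmul, TensorProduct.smul_tmul']
      rw [Algebra.smul_def, mul_one, smul_eq_mul, mul_one]
      rfl
    have hπι : ∀ m : M, π (ι m) = 0 := fun m => (hιker (ι m)).mpr ⟨m, rfl⟩
    let q : B ⊗[A'] Ω[A'⁄Λ] →ₗ[B] Ω[B⁄Λ] := KaehlerDifferential.mapBaseChange Λ A' B
    let inc : M →ₗ[B] B ⊗[A'] Ω[A'⁄Λ] :=
      { toFun := fun m => (1 : B) ⊗ₜ[A'] KaehlerDifferential.D Λ A' (ι m)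
        map_add' := fun m₁ m₂ => by
          simp only [map_add, TensorProduct.tmul_add]
        map_smul' := fun b m => by
          obtain ⟨x, rfl⟩ := hπ b
          simp only [RingHom.id_apply]
          rw [hιlin, Derivation.leibniz, TensorProduct.tmul_add, hkey, hkey, hπι, zero_smul,
            add_zero] }
    have hex : Function.Exact inc q := by
      intro y
      have h1 := KaehlerDifferential.exact_kerCotangentToTensor_mapBaseChange Λ A' B hππ y
      constructor
      · intro h0
        obtain ⟨c, rfl⟩ := h1.mp h0
        obtain ⟨⟨x, hx⟩, rfl⟩ := Ideal.toCotangent_surjective _ c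
        obtain ⟨m, rfl⟩ := (hιker x).mp (by have := RingHom.mem_ker.mp hx; exact this)
        exact ⟨m, rfl⟩
      · rintro ⟨m, rfl⟩
        exact h1.mpr ⟨(RingHom.ker (algebraMap A' B)).toCotangent
          ⟨ι m, by exact RingHom.mem_ker.mpr (hπι m)⟩, rfl⟩
    let e₁ : (A' ⧸ (RingHom.ker π.toRingHom)) ≃+* B :=
      RingHom.quotientKerEquivOfSurjective (f := π.toRingHom) hπ
    have he₁ : ∀ x : A', e₁ (Ideal.Quotient.mk _ x) = π x := fun x =>
      RingHom.kerLift_mk π.toRingHom x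
    let eₗ : (A' ⧸ (RingHom.ker π.toRingHom : Ideal A')) ≃ₗ[A'] B :=
      { e₁ with
        map_smul' := fun x y => by
          obtain ⟨z, rfl⟩ := Ideal.Quotient.mk_surjective y
          simp only [RingHom.id_apply]
          show e₁ (x • Ideal.Quotient.mk _ z) = x • e₁ (Ideal.Quotient.mk _ z)
          rw [show x • Ideal.Quotient.mk (RingHom.ker π.toRingHom) z
              = Ideal.Quotient.mk _ (x * z) from rfl, he₁, he₁, map_mul, Algebra.smul_def]
          rfl }
    have hψ : ∀ m : M,
        (TensorProduct.quotTensorEquivQuotSMul (Ω[A'⁄Λ]) (RingHom.ker π.toRingHom))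
          ((LinearMap.rTensor (Ω[A'⁄Λ]) eₗ.symm.toLinearMap) (inc m)) =
        Submodule.Quotient.mk ((KaehlerDifferential.D Λ A') (ι m)) := by
      intro m
      have h1 : eₗ.symm (1 : B) = Ideal.Quotient.mk _ (1 : A') := by
        rw [LinearEquiv.symm_apply_eq]
        exact ((he₁ 1).trans (map_one π)).symm
      show (TensorProduct.quotTensorEquivQuotSMul _ _)
          ((LinearMap.rTensor _ eₗ.symm.toLinearMap)
            ((1 : B) ⊗ₜ[A'] KaehlerDifferential.D Λ A' (ι m))) = _
      rw [LinearMap.rTensor_tmul, show eₗ.symm.toLinearMap (1 : B)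
          = Ideal.Quotient.mk (RingHom.ker π.toRingHom) 1 from h1,
        TensorProduct.quotTensorEquivQuotSMul_mk_tmul, one_smul]
    have hincinj : Function.Injective inc := fun m₁ m₂ h => by
      apply hj
      show Submodule.Quotient.mk _ = Submodule.Quotient.mk _
      rw [← hψ m₁, ← hψ m₂, h]
    have hqD : ∀ x : A', q ((1 : B) ⊗ₜ[A'] KaehlerDifferential.D Λ A' x)
        = KaehlerDifferential.D Λ B (π x) := by
      intro x
      show KaehlerDifferential.mapBaseChange Λ A' B _ = _
      rw [KaehlerDifferential.mapBaseChange_tmul, one_smul, KaehlerDifferential.map_D]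
      rfl
    let ρ : A' →+* TrivSqZeroExt B (B ⊗[A'] Ω[A'⁄Λ]) :=
      { toFun := fun x => ⟨π x, (1 : B) ⊗ₜ[A'] KaehlerDifferential.D Λ A' x⟩
        map_one' := TrivSqZeroExt.ext (map_one π) (by
          show (1 : B) ⊗ₜ[A'] (KaehlerDifferential.D Λ A') 1 = 0
          rw [Derivation.map_one_eq_zero, TensorProduct.tmul_zero])
        map_mul' := fun x y => TrivSqZeroExt.ext (map_mul π x y) (by
          show (1 : B) ⊗ₜ[A'] (KaehlerDifferential.D Λ A') (x * y) = _
          show _ = π x • ((1 : B) ⊗ₜ[A'] KaehlerDifferential.D Λ A' y)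
            + MulOpposite.op (π y) • ((1 : B) ⊗ₜ[A'] KaehlerDifferential.D Λ A' x)
          rw [Derivation.leibniz, TensorProduct.tmul_add, hkey, hkey, op_smul_eq_smul])
        map_zero' := TrivSqZeroExt.ext (map_zero π) (by
          show (1 : B) ⊗ₜ[A'] (KaehlerDifferential.D Λ A') 0 = 0
          rw [map_zero, TensorProduct.tmul_zero])
        map_add' := fun x y => TrivSqZeroExt.ext (map_add π x y) (by
          show (1 : B) ⊗ₜ[A'] (KaehlerDifferential.D Λ A') (x + y) = _
          show _ = (1 : B) ⊗ₜ[A'] (KaehlerDifferential.D Λ A') x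
            + (1 : B) ⊗ₜ[A'] (KaehlerDifferential.D Λ A') y
          rw [map_add, TensorProduct.tmul_add]) }
    refine ⟨B ⊗[A'] Ω[A'⁄Λ], inferInstance, inferInstance, inferInstance, inferInstance,
      inferInstance, inferInstance, q, inc,
      KaehlerDifferential.mapBaseChange_surjective Λ A' B hππ, hincinj, hex,
      ρ, ?_, fun x => rfl, ?_, ?_, ?_, ?_⟩
    · intro x y h
      have h1 : π x = π y := congrArg TrivSqZeroExt.fst h
      have h2 : (1 : B) ⊗ₜ[A'] (KaehlerDifferential.D Λ A') x
          = (1 : B) ⊗ₜ[A'] (KaehlerDifferential.D Λ A') y := congrArg TrivSqZeroExt.snd h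
      obtain ⟨m, hm⟩ := (hιker (x - y)).mp (by rw [map_sub, h1, sub_self])
      have hz : inc m = 0 := by
        show (1 : B) ⊗ₜ[A'] (KaehlerDifferential.D Λ A') (ι m) = 0
        rw [hm, map_sub, TensorProduct.tmul_sub, h2, sub_self]
      have hm0 : m = 0 := hincinj (hz.trans (map_zero inc).symm)
      rw [← sub_eq_zero, ← hm, hm0, map_zero]
    · exact fun x => (hqD x).symm
    · intro m
      refine TrivSqZeroExt.ext ?_ ?_
      · show π (ι m) = (TrivSqZeroExt.inr (inc m)).fst
        rw [hπι, TrivSqZeroExt.fst_inr]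
      · show (1 : B) ⊗ₜ[A'] (KaehlerDifferential.D Λ A') (ι m) = (TrivSqZeroExt.inr (inc m)).snd
        rw [TrivSqZeroExt.snd_inr]
        rfl
    · intro c
      refine TrivSqZeroExt.ext ?_ ?_
      · show π (algebraMap Λ A' c) = _
        rw [π.commutes, TrivSqZeroExt.algebraMap_eq_inl', TrivSqZeroExt.fst_inl]
      · show (1 : B) ⊗ₜ[A'] (KaehlerDifferential.D Λ A') (algebraMap Λ A' c) = _
        rw [Derivation.map_algebraMap, TensorProduct.tmul_zero,
          TrivSqZeroExt.algebraMap_eq_inl', TrivSqZeroExt.snd_inl]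
    · intro y hy
      obtain ⟨x, hx⟩ := hπ y.fst
      have h0 : q (y.snd - (1 : B) ⊗ₜ[A'] (KaehlerDifferential.D Λ A') x) = 0 := by
        rw [map_sub, hqD, hx, ← hy, sub_self]
      obtain ⟨m, hm⟩ := (hex _).mp h0
      refine ⟨x + ι m, TrivSqZeroExt.ext ?_ ?_⟩
      · show π (x + ι m) = y.fst
        rw [map_add, hπι, add_zero, hx]
      · show (1 : B) ⊗ₜ[A'] (KaehlerDifferential.D Λ A') (x + ι m) = y.snd
        rw [map_add, TensorProduct.tmul_add,
          show (1 : B) ⊗ₜ[A'] (KaehlerDifferential.D Λ A') (ι m) = inc m from rfl, hm,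
          add_comm, sub_add_cancel]
  · rintro ⟨E, _, _, _, _, _, _, q, inc, hqs, hincinj, hex,
      ρ, hρinj, hfst, hcpt, hρι, hρalg, hrng⟩
    letI : Module A' E := Module.compHom E π.toRingHom
    have hsmul : ∀ (x : A') (e : E), x • e = π x • e := fun _ _ => rfl
    haveI : IsScalarTower Λ A' E := ⟨fun c x e => by
      rw [hsmul, hsmul, Algebra.smul_def, map_mul, π.commutes, mul_smul, algebraMap_smul]⟩
    let δ : Derivation Λ A' E :=
      { toFun := fun x => (ρ x).snd
        map_add' := fun x y => by simp
        map_smul' := fun c x => by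
          simp only [RingHom.id_apply]
          rw [Algebra.smul_def, map_mul, hρalg, TrivSqZeroExt.snd_mul,
            TrivSqZeroExt.algebraMap_eq_inl', TrivSqZeroExt.fst_inl, TrivSqZeroExt.snd_inl,
            smul_zero, add_zero, algebraMap_smul]
        map_one_eq_zero' := by simp
        leibniz' := fun x y => by
          show (ρ (x * y)).snd = x • (ρ y).snd + y • (ρ x).snd
          rw [map_mul, TrivSqZeroExt.snd_mul, hsmul, hsmul, hfst, hfst, op_smul_eq_smul] }
    have hδ : ∀ x : A', δ x = (ρ x).snd := fun _ => rfl
    intro m₁ m₂ h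
    have hmem : (KaehlerDifferential.D Λ A') (ι (m₁ - m₂)) ∈
        ((RingHom.ker π.toRingHom) • ⊤ : Submodule A' (Ω[A'⁄Λ])) := by
      rw [← Submodule.Quotient.mk_eq_zero]
      rw [map_sub, map_sub, Submodule.Quotient.mk_sub]
      rw [show Submodule.Quotient.mk ((KaehlerDifferential.D Λ A') (ι m₁)) =
        Submodule.Quotient.mk ((KaehlerDifferential.D Λ A') (ι m₂)) from h, sub_self]
    have hL : δ.liftKaehlerDifferential ((KaehlerDifferential.D Λ A') (ι (m₁ - m₂))) = 0 := by
      refine Submodule.smul_induction_on hmem ?_ ?_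
      · intro r hr n _
        rw [map_smul, hsmul, show π r = 0 from hr, zero_smul]
      · intro w₁ w₂ h₁ h₂
        rw [map_add, h₁, h₂, add_zero]
    rw [Derivation.liftKaehlerDifferential_comp_D, hδ, hρι] at hL
    rw [TrivSqZeroExt.snd_inr] at hL
    have h0 : m₁ - m₂ = 0 := hincinj (by rw [hL, map_zero])
    exact sub_eq_zero.mp h0



open IsLocalRing

/-- Let `Λ → A` be a morphism of complete local Noetherian `k`-algebras with residue field
`k`, presented as `A = R/I` with `R = Λ[[X_1,…,X_s]]` and `I ⊆ m_Λ R + (X)²`.  A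
`Λ`-algebra extension `0 → M → A' → A → 0` (square zero) has its class in the subgroup
`Ext¹_A(Ω¹_{A/Λ}, M) ⊆ T¹_{A/Λ}(M)` — i.e. it arises from a module extension
`0 → M → E → Ω¹_{A/Λ} → 0` via the fibre-product construction inside the trivial square
zero extension `A[E]` — if and only if the Jacobi map
`j : M → Ω¹_{A'/Λ} ⊗_{A'} A = Ω¹_{A'/Λ}/(ker π)·Ω¹_{A'/Λ}` is injective. -/
theorem stmt_17 (k Λ : Type) [Field k] [CommRing Λ] [Algebra k Λ]
    [IsLocalRing Λ] [IsNoetherianRing Λ] [IsAdicComplete (maximalIdeal Λ) Λ]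
    (hΛres : Function.Bijective ((Ideal.Quotient.mk (maximalIdeal Λ)).comp (algebraMap k Λ)))
    (s : ℕ) (I : Ideal (MvPowerSeries (Fin s) Λ))
    (hI : I ≤ Ideal.map (algebraMap Λ (MvPowerSeries (Fin s) Λ)) (maximalIdeal Λ) ⊔
      (Ideal.span (Set.range (MvPowerSeries.X : Fin s → MvPowerSeries (Fin s) Λ))) ^ 2)
    -- the `A`-module `M`
    (M : Type) [AddCommGroup M] [Module (MvPowerSeries (Fin s) Λ ⧸ I) M]
    [Module.Finite (MvPowerSeries (Fin s) Λ ⧸ I) M]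
    -- a square-zero `Λ`-algebra extension `A'` of `A = R/I` by `M`
    (A' : Type) [CommRing A'] [Algebra Λ A']
    (π : A' →ₐ[Λ] (MvPowerSeries (Fin s) Λ ⧸ I)) (hπ : Function.Surjective π)
    (hsq : ∀ x y : A', π x = 0 → π y = 0 → x * y = 0)
    (ι : M →+ A') (hιinj : Function.Injective ι)
    (hιker : ∀ x : A', π x = 0 ↔ x ∈ Set.range ι)
    (hιlin : ∀ (a' : A') (m : M), ι (π a' • m) = a' * ι m) :
    -- the Jacobi map is injective …
    (Function.Injective (fun m : M =>
      Submodule.Quotient.mk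
        (p := ((RingHom.ker π.toRingHom) • ⊤ : Submodule A' (Ω[A'⁄Λ])))
        ((KaehlerDifferential.D Λ A') (ι m)))) ↔
    -- … iff the extension arises from a module extension `0 → M → E → Ω¹_{A/Λ} → 0`
    (∃ (E : Type) (_ : AddCommGroup E) (_ : Module (MvPowerSeries (Fin s) Λ ⧸ I) E)
        (_ : Module Λ E) (_ : IsScalarTower Λ (MvPowerSeries (Fin s) Λ ⧸ I) E)
        (_ : Module (MvPowerSeries (Fin s) Λ ⧸ I)ᵐᵒᵖ E)
        (_ : IsCentralScalar (MvPowerSeries (Fin s) Λ ⧸ I) E)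
        (q : E →ₗ[MvPowerSeries (Fin s) Λ ⧸ I] Ω[(MvPowerSeries (Fin s) Λ ⧸ I)⁄Λ])
        (inc : M →ₗ[MvPowerSeries (Fin s) Λ ⧸ I] E),
      Function.Surjective q ∧ Function.Injective inc ∧ Function.Exact inc q ∧
      ∃ ρ : A' →+* TrivSqZeroExt (MvPowerSeries (Fin s) Λ ⧸ I) E,
        Function.Injective ρ ∧
        (∀ x : A', (ρ x).fst = π x) ∧
        (∀ x : A', (KaehlerDifferential.D Λ (MvPowerSeries (Fin s) Λ ⧸ I)) (ρ x).fst =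
          q (ρ x).snd) ∧
        (∀ m : M, ρ (ι m) = TrivSqZeroExt.inr (inc m)) ∧
        (∀ c : Λ, ρ (algebraMap Λ A' c) =
          algebraMap Λ (TrivSqZeroExt (MvPowerSeries (Fin s) Λ ⧸ I) E) c) ∧
        (∀ y : TrivSqZeroExt (MvPowerSeries (Fin s) Λ ⧸ I) E,
          (KaehlerDifferential.D Λ (MvPowerSeries (Fin s) Λ ⧸ I)) y.fst = q y.snd →
          y ∈ Set.range ρ)) := by
  exact stmt17_aux Λ _ M A' π hπ hsq ι hιinj hιker hιlin
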